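/- Let G be a finite connected simple graph with m vertices and n \geq 1 edges, and let G^(0) be its symmetric tube. Then 2(|E(G^(0))| - |V(G^(0))| + 1) = 2 - 4n + \sum_{v \in V(G)} (deg(v))^2; that is, the cycle rank |E(G^(0))| - |V(G^(0))| + 1 of the connected graph G^(0) equals 1 - 2n + (1/2)\sum_{v \in V(G)} (deg(v))^2. -/

import Mathlib

open SimpleGraph

variable {V : Type*}

/-- A pair-vertex of the symmetric tube: a vertex `v` together with an unordered pair
of two distinct neighbors of `v`. -/
abbrev TubePair (G : SimpleGraph V) : Type _ :=
  {p : V × Sym2 V // ¬ p.2.IsDiag ∧ ∀ x ∈ p.2, G.Adj p.1 x}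

/-- The vertex set of the symmetric tube: darts of `G` together with pair-vertices. -/
abbrev TubeVertex (G : SimpleGraph V) : Type _ := G.Dart ⊕ TubePair G

/-- The symmetric tube `G⁽⁰⁾` of a simple graph `G`: an X-edge joins the darts `(v,u)` and
`(u,v)` for each edge `{v,u}` of `G`, and Y-edges join the pair-vertex `(v,{a,b})` to each of
the darts `(v,a)` and `(v,b)`. -/
def tube (G : SimpleGraph V) : SimpleGraph (TubeVertex G) where
  Adj x y :=
    match x, y with
    | Sum.inl d, Sum.inl d' => d' = d.symm
    | Sum.inl d, Sum.inr p => p.1.1 = d.fst ∧ d.snd ∈ p.1.2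
    | Sum.inr p, Sum.inl d => p.1.1 = d.fst ∧ d.snd ∈ p.1.2
    | Sum.inr _, Sum.inr _ => False
  symm := by
    refine ⟨?_⟩
    rintro (d | p) (d' | p') h
    · simp only at h ⊢
      rw [h, SimpleGraph.Dart.symm_symm]
    · exact h
    · exact h
    · exact h
  loopless := by
    refine ⟨?_⟩
    rintro (d | p) h
    · exact SimpleGraph.Dart.symm_ne d h.symm
    · exact h

instance sym2AllDec [DecidableEq V] {P : V → Prop} [DecidablePred P] (z : Sym2 V) :
    Decidable (∀ x ∈ z, P x) :=
  z.recOnSubsingleton fun a b =>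
    decidable_of_iff (P a ∧ P b) (by
      constructor
      · rintro ⟨h1, h2⟩ x hx
        rcases Sym2.mem_iff.mp hx with rfl | rfl <;> assumption
      · intro h; exact ⟨h _ (Sym2.mem_mk_left _ _), h _ (Sym2.mem_mk_right _ _)⟩)

instance tubePairFintype [Fintype V] [DecidableEq V] (G : SimpleGraph V) [DecidableRel G.Adj] :
    Fintype (TubePair G) := Subtype.fintype _

instance tubeAdjDec [DecidableEq V] (G : SimpleGraph V) [DecidableRel G.Adj] :
    DecidableRel (tube G).Adj := fun x y =>
  match x, y with
  | Sum.inl d, Sum.inl d' => inferInstanceAs (Decidable (d' = d.symm))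
  | Sum.inl d, Sum.inr p => inferInstanceAs (Decidable (_ ∧ _))
  | Sum.inr p, Sum.inl d => inferInstanceAs (Decidable (_ ∧ _))
  | Sum.inr _, Sum.inr _ => inferInstanceAs (Decidable False)

lemma tube_adj_inl_inl (G : SimpleGraph V) (d d' : G.Dart) :
    (tube G).Adj (Sum.inl d) (Sum.inl d') ↔ d' = d.symm := Iff.rfl

lemma tube_adj_inl_inr (G : SimpleGraph V) (d : G.Dart) (p : TubePair G) :
    (tube G).Adj (Sum.inl d) (Sum.inr p) ↔ p.1.1 = d.fst ∧ d.snd ∈ p.1.2 := Iff.rfl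

lemma tube_adj_inr_inl (G : SimpleGraph V) (p : TubePair G) (d : G.Dart) :
    (tube G).Adj (Sum.inr p) (Sum.inl d) ↔ p.1.1 = d.fst ∧ d.snd ∈ p.1.2 := Iff.rfl

lemma tube_adj_inr_inr (G : SimpleGraph V) (p q : TubePair G) :
    ¬ (tube G).Adj (Sum.inr p) (Sum.inr q) := fun h => h

variable [Fintype V] [DecidableEq V] (G : SimpleGraph V) [DecidableRel G.Adj]

lemma adj_congr_left {G : SimpleGraph V} {a b c : V} (h : G.Adj a c) (hab : a = b) :
    G.Adj b c := hab ▸ h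

/-- Neighbors of a dart-vertex in the tube biject with neighbors of the dart's head. -/
def dartNbrEquiv (d : G.Dart) :
    (tube G).neighborSet (Sum.inl d) ≃ G.neighborSet d.fst where
  toFun x :=
    match x with
    | ⟨Sum.inl _, _⟩ => ⟨d.snd, d.adj⟩
    | ⟨Sum.inr p, h⟩ => ⟨Sym2.Mem.other' h.2, adj_congr_left (p.2.2 _ (Sym2.other_mem' h.2)) h.1⟩
  invFun x :=
    if hx : (x : V) = d.snd then ⟨Sum.inl d.symm, rfl⟩
    else
      ⟨Sum.inr ⟨(d.fst, s(d.snd, (x : V))),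
        by simp [Sym2.isDiag_iff_proj_eq, Ne.symm hx],
        by
          intro y hy
          rcases Sym2.mem_iff.mp hy with rfl | rfl
          · exact d.adj
          · exact x.2⟩,
        ⟨rfl, Sym2.mem_mk_left _ _⟩⟩
  left_inv := by
    rintro ⟨(d' | p), h⟩
    · have h' : d' = d.symm := h
      subst h'
      simp
    · have hne : Sym2.Mem.other' h.2 ≠ d.snd := by
        rw [← Sym2.other_eq_other']
        exact Sym2.other_ne p.2.1 h.2
      simp only [hne, dif_neg]
      apply Subtype.ext
      apply congrArg Sum.inr
      apply Subtype.ext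
      exact Prod.ext h.1.symm (Sym2.other_spec' h.2)
  right_inv := by
    rintro ⟨x, hx⟩
    by_cases hxd : x = d.snd
    · subst hxd; simp
    · simp only [hxd, dif_neg]
      apply Subtype.ext
      have hmem : d.snd ∈ s(d.snd, x) := Sym2.mem_mk_left _ _
      have : s(d.snd, Sym2.Mem.other' hmem) = s(d.snd, x) := Sym2.other_spec' hmem
      exact Sym2.congr_right.mp this

lemma deg_inl (d : G.Dart) : (tube G).degree (Sum.inl d) = G.degree d.fst := by
  rw [← card_neighborSet_eq_degree, ← card_neighborSet_eq_degree]
  exact Fintype.card_congr (dartNbrEquiv G d)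

lemma deg_inr (p : TubePair G) : (tube G).degree (Sum.inr p) = 2 := by
  obtain ⟨⟨v, s⟩, hp⟩ := p
  revert hp
  induction s using Sym2.ind with
  | _ a b =>
    intro hp
    obtain ⟨hd, ha⟩ := hp
    have hab : a ≠ b := by simpa [Sym2.isDiag_iff_proj_eq] using hd
    have haadj : G.Adj v a := ha a (Sym2.mem_mk_left _ _)
    have hbadj : G.Adj v b := ha b (Sym2.mem_mk_right _ _)
    rw [SimpleGraph.degree]
    have hkey : (tube G).neighborFinset (Sum.inr ⟨(v, s(a,b)), hd, ha⟩) =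
        {Sum.inl (SimpleGraph.Dart.mk (v, a) haadj), Sum.inl (SimpleGraph.Dart.mk (v, b) hbadj)} := by
      ext x
      rcases x with d | q
      · rw [SimpleGraph.mem_neighborFinset]
        rw [tube_adj_inr_inl]
        simp only [Finset.mem_insert, Finset.mem_singleton]
        constructor
        · rintro ⟨h1, h2⟩
          rcases Sym2.mem_iff.mp h2 with h3 | h3
          · left
            apply congrArg Sum.inl
            exact SimpleGraph.Dart.ext _ _ (Prod.ext h1.symm h3)
          · right
            apply congrArg Sum.inl
            exact SimpleGraph.Dart.ext _ _ (Prod.ext h1.symm h3)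
        · rintro (h | h) <;> rw [Sum.inl.injEq] at h <;> subst h <;>
            exact ⟨rfl, by simp⟩
      · simp only [SimpleGraph.mem_neighborFinset, Finset.mem_insert, Finset.mem_singleton]
        constructor
        · intro h; exact absurd h (tube_adj_inr_inr G _ _)
        · rintro (h | h) <;> exact absurd h (by simp)
    rw [hkey]
    rw [Finset.card_insert_of_notMem, Finset.card_singleton]
    simp only [Finset.mem_singleton, Sum.inl.injEq]
    intro h
    exact hab (congrArg (fun d => d.snd) h)


/-- For a finite connected simple graph `G` with `m` vertices and `n ≥ 1` edges, the cycle
rank `|E(G⁽⁰⁾)| - |V(G⁽⁰⁾)| + 1` of the connected symmetric tube `G⁽⁰⁾` satisfies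
`2(|E(G⁽⁰⁾)| - |V(G⁽⁰⁾)| + 1) = 2 - 4n + ∑_v (deg v)²`. -/
theorem stmt_9 {V : Type*} [Fintype V] [DecidableEq V] (G : SimpleGraph V)
    [DecidableRel G.Adj] (hG : G.Connected) (m n : ℕ) (hm : m = Fintype.card V)
    (hn : n = G.edgeFinset.card) (hn1 : 1 ≤ n) :
    2 * ((Nat.card (tube G).edgeSet : ℤ) - (Nat.card (TubeVertex G) : ℤ) + 1) =
      2 - 4 * (n : ℤ) + ∑ v : V, (G.degree v : ℤ) ^ 2 := by
  set P := Fintype.card (TubePair G) with hP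
  have hVc : Nat.card (TubeVertex G) = 2 * n + P := by
    rw [Nat.card_eq_fintype_card, Fintype.card_sum,
      SimpleGraph.dart_card_eq_twice_card_edges, hn]
  have hdart : ∑ d : G.Dart, G.degree d.fst = ∑ v : V, G.degree v * G.degree v := by
    rw [← Finset.sum_fiberwise_of_maps_to (t := Finset.univ)
      (g := fun d : G.Dart => d.fst) (fun x _ => Finset.mem_univ _) (fun d => G.degree d.fst)]
    refine Finset.sum_congr rfl fun v _ => ?_
    have hc : ∑ d ∈ Finset.univ.filter (fun d : G.Dart => d.fst = v), G.degree d.fst =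
        ∑ _d ∈ Finset.univ.filter (fun d : G.Dart => d.fst = v), G.degree v :=
      Finset.sum_congr rfl fun d hd => by rw [(Finset.mem_filter.mp hd).2]
    rw [hc, Finset.sum_const, smul_eq_mul]
    congr 1
    exact G.dart_fst_fiber_card_eq_degree v
  have hsum : ∑ x : TubeVertex G, (tube G).degree x = 2 * (tube G).edgeFinset.card :=
    SimpleGraph.sum_degrees_eq_twice_card_edges _
  rw [Fintype.sum_sum_type] at hsum
  simp only [deg_inl, deg_inr] at hsum
  rw [hdart, Finset.sum_const, Finset.card_univ, smul_eq_mul, ← hP] at hsum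
  have hE : Nat.card (tube G).edgeSet = (tube G).edgeFinset.card := by
    rw [Nat.card_eq_fintype_card, SimpleGraph.edgeFinset_card]
  rw [hE, hVc]
  have hsq : ∑ v : V, (G.degree v : ℤ) ^ 2 = ∑ v : V, (G.degree v : ℤ) * (G.degree v : ℤ) := by
    simp [pow_two]
  rw [hsq]
  have hcast : (∑ v : V, G.degree v * G.degree v : ℤ) + (P : ℤ) * 2 =
      2 * ((tube G).edgeFinset.card : ℤ) := by exact_mod_cast congrArg (Nat.cast : ℕ → ℤ) hsum
  push_cast at hcast ⊢
  linarith
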